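/- Let H := Q·T_0 + q·Σ_{x=1}^{L} T_x, where T_0, T_1, …, T_L are the explicit matrices of the type-B Hecke algebra action given in the context, and let G be the diagonal matrix with G(b,b) := [ ∏_{j=1}^{d(1)} Q q^{L + x_j − N→^1_{x_j}(b)} ] · ζ_0 · [ ∏_{i=1}^{d(−1)} q^{L − y_i − N→^1_{y_i}(b)} ] (ζ_0 := Q q^{L−d(1)}, 1, or q^{L−d(1)} according as b(0) = 1, 0, or −1). Then G^{−1} (H − (L+1)·Id) G equals the generator 𝓛 of the single-species open ASEP: its off-diagonal entries are q² for swapping an adjacent pair (x−1,x) with larger value on the left, 1 for swapping an adjacent pair with larger value on the right, 1 for changing the value at site 0 from 1 to −1, and Q² for changing the value at site 0 from −1 to 1, with diagonal entries making rows sum to 0. -/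
import Mathlib


open Matrix BigOperators Finset

noncomputable section

namespace Stmt8

/-- Configurations of the single-species open ASEP on sites `{0,1,…,L}`.
Values are encoded in `Fin 3`: `0 ↦ −1`, `1 ↦ 0` (hole), `2 ↦ 1`;
this encoding is order-preserving. -/
abbrev Conf (L : ℕ) := Fin (L + 1) → Fin 3

/-- The matrix `qT_x` (for `1 ≤ x ≤ L`), acting on sites `x−1, x`:
diagonal entry `1` if `η(x−1) = η(x)`, `1 − q²` if `η(x−1) > η(x)`, `0` if
`η(x−1) < η(x)`; entry `q` for the swap of the values at sites `x−1` and `x`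
when they differ; all other entries `0`. -/
def qT (L : ℕ) (q : ℝ) (x : ℕ) : Matrix (Conf L) (Conf L) ℝ :=
  fun η η' =>
    if h : 1 ≤ x ∧ x ≤ L then
      (if η' = η then
        (if η ⟨x - 1, by omega⟩ = η ⟨x, by omega⟩ then 1
         else if η ⟨x, by omega⟩ < η ⟨x - 1, by omega⟩ then 1 - q ^ 2
         else 0)
      else if η' = η ∘ Equiv.swap ⟨x - 1, by omega⟩ ⟨x, by omega⟩ ∧
          η ⟨x - 1, by omega⟩ ≠ η ⟨x, by omega⟩ then q
      else 0)
    else 0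

/-- The matrix `QT_0`, acting on site `0`: diagonal entry `1` if `η(0) = 0`,
`1 − Q²` if `η(0) = −1`, `0` if `η(0) = 1`; entry `Q` whenever `η'` agrees with `η`
off site `0` and `{η(0), η'(0)} = {−1, 1}`; all other entries `0`. -/
def QT0 (L : ℕ) (Q : ℝ) : Matrix (Conf L) (Conf L) ℝ :=
  fun η η' =>
    if η' = η then
      (if η 0 = 1 then 1 else if η 0 = 0 then 1 - Q ^ 2 else 0)
    else if (∀ z : Fin (L + 1), z ≠ 0 → η' z = η z) ∧
        ((η 0 = 0 ∧ η' 0 = 2) ∨ (η 0 = 2 ∧ η' 0 = 0)) then Q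
    else 0

/-- The Hamiltonian `H = Q·T₀ + q·Σ_{x=1}^{L} T_x`. -/
def Ham (L : ℕ) (q Q : ℝ) : Matrix (Conf L) (Conf L) ℝ :=
  QT0 L Q + ∑ x ∈ Finset.Icc 1 L, qT L q x

/-- `N→¹_x(b)`: the number of sites strictly to the right of `x` with `b`-value `1`. -/
def Nr1 (L : ℕ) (b : Conf L) (x : Fin (L + 1)) : ℕ :=
  (Finset.univ.filter (fun y : Fin (L + 1) => x < y ∧ b y = 2)).card

/-- `d(1)`: the number of sites in `{1,…,L}` with `b`-value `1`. -/
def d1 (L : ℕ) (b : Conf L) : ℕ :=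
  (Finset.univ.filter (fun x : Fin (L + 1) => 0 < (x : ℕ) ∧ b x = 2)).card

/-- `ζ₀ = Q q^{L−d(1)}`, `1`, or `q^{L−d(1)}` according as `b(0) = 1`, `0`, or `−1`. -/
def zeta0 (L : ℕ) (q Q : ℝ) (b : Conf L) : ℝ :=
  if b 0 = 2 then Q * q ^ ((L : ℤ) - (d1 L b : ℤ))
  else if b 0 = 1 then 1
  else q ^ ((L : ℤ) - (d1 L b : ℤ))

/-- `G(b,b) = [∏_{j=1}^{d(1)} Q q^{L+x_j−N→¹_{x_j}(b)}] ζ₀ [∏_{i=1}^{d(−1)} q^{L−y_i−N→¹_{y_i}(b)}]`. -/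
def Gfun (L : ℕ) (q Q : ℝ) (b : Conf L) : ℝ :=
  (∏ x ∈ Finset.univ.filter (fun x : Fin (L + 1) => 0 < (x : ℕ) ∧ b x = 2),
      Q * q ^ ((L : ℤ) + ((x : ℕ) : ℤ) - (Nr1 L b x : ℤ))) *
    zeta0 L q Q b *
    (∏ y ∈ Finset.univ.filter (fun y : Fin (L + 1) => 0 < (y : ℕ) ∧ b y = 0),
      q ^ ((L : ℤ) - ((y : ℕ) : ℤ) - (Nr1 L b y : ℤ)))

/-- Bulk off-diagonal rates of the open ASEP generator. -/
def bulk (L : ℕ) (q : ℝ) (η η' : Conf L) : ℝ :=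
  ∑ x : Fin (L + 1),
    if h : (x : ℕ) + 1 < L + 1 then
      (if η' = η ∘ Equiv.swap x ⟨(x : ℕ) + 1, h⟩ ∧ η x ≠ η ⟨(x : ℕ) + 1, h⟩ then
        (if η ⟨(x : ℕ) + 1, h⟩ < η x then q ^ 2 else 1)
      else 0)
    else 0

/-- Boundary off-diagonal rates of the open ASEP generator at site `0`. -/
def bdry (L : ℕ) (Q : ℝ) (η η' : Conf L) : ℝ :=
  if (∀ z : Fin (L + 1), z ≠ 0 → η' z = η z) ∧ η 0 = 2 ∧ η' 0 = 0 then 1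
  else if (∀ z : Fin (L + 1), z ≠ 0 → η' z = η z) ∧ η 0 = 0 ∧ η' 0 = 2 then Q ^ 2
  else 0

/-- The generator `𝓛` of the single-species open ASEP on `{0,…,L}`. -/
def gen (L : ℕ) (q Q : ℝ) : Matrix (Conf L) (Conf L) ℝ :=
  fun η η' =>
    if η' = η then
      -∑ η'' : Conf L,
        (if η'' = η then 0 else bulk L q η η'' + bdry L Q η η'')
    else bulk L q η η' + bdry L Q η η'

section Aux

variable {L : ℕ} {q Q : ℝ}

/-- Uniform per-site factor. -/
def ff (L : ℕ) (q Q : ℝ) (b : Conf L) (z : Fin (L + 1)) : ℝ :=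
  if b z = 2 then Q * q ^ ((L : ℤ) + ((z : ℕ) : ℤ) - (Nr1 L b z : ℤ))
  else if b z = 0 then q ^ ((L : ℤ) - ((z : ℕ) : ℤ) - (Nr1 L b z : ℤ))
  else 1

/-- Product form of `Gfun`. -/
def W (L : ℕ) (q Q : ℝ) (b : Conf L) : ℝ := ∏ z, ff L q Q b z

lemma fin3_cases (v : Fin 3) : v = 0 ∨ v = 1 ∨ v = 2 := by fin_cases v <;> simp

lemma ff_pos (hq : 0 < q) (hQ : 0 < Q) (b : Conf L) (z : Fin (L + 1)) :
    0 < ff L q Q b z := by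
  unfold ff
  rcases fin3_cases (b z) with h | h | h <;> simp [h] <;>
    positivity

lemma W_pos (hq : 0 < q) (hQ : 0 < Q) (b : Conf L) : 0 < W L q Q b :=
  Finset.prod_pos fun z _ => ff_pos hq hQ b z

lemma Nr1_succ (b : Conf L) (p : Fin (L + 1)) (h : (p : ℕ) + 1 < L + 1) :
    Nr1 L b p = Nr1 L b ⟨(p : ℕ) + 1, h⟩ + (if b ⟨(p : ℕ) + 1, h⟩ = 2 then 1 else 0) := by
  set p' : Fin (L + 1) := ⟨(p : ℕ) + 1, h⟩ with hp'
  unfold Nr1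
  rw [Finset.card_filter, Finset.card_filter]
  have key : ∀ y : Fin (L + 1), (if p < y ∧ b y = 2 then (1 : ℕ) else 0) =
      (if p' < y ∧ b y = 2 then 1 else 0) + (if y = p' ∧ b y = 2 then 1 else 0) := by
    intro y
    by_cases hy2 : b y = 2
    · simp only [hy2, and_true]
      have hiff : p < y ↔ (p' < y ∨ y = p') := by
        rw [Fin.lt_def, Fin.lt_def, Fin.ext_iff]
        simp only [hp']
        omega
      by_cases h1 : p' < y
      · rw [if_pos (hiff.2 (Or.inl h1)), if_pos h1, if_neg (ne_of_gt h1)]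
      · by_cases h2 : y = p'
        · rw [if_pos (hiff.2 (Or.inr h2)), if_neg h1, if_pos h2]
        · rw [if_neg (fun hc => ((hiff.1 hc).elim h1 h2)), if_neg h1, if_neg h2]
    · simp [hy2]
  rw [Finset.sum_congr rfl fun y _ => key y, Finset.sum_add_distrib]
  congr 1
  simp only [ite_and]
  rw [Finset.sum_ite_eq' Finset.univ p' (fun y => if b y = 2 then (1 : ℕ) else 0)]
  simp

lemma Nr1_swap_other (b : Conf L) (p p' z : Fin (L + 1)) (hps : (p' : ℕ) = (p : ℕ) + 1)
    (hzp : z ≠ p) (hzp' : z ≠ p') :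
    Nr1 L (b ∘ Equiv.swap p p') z = Nr1 L b z := by
  have hz : ∀ y : Fin (L + 1), z < y ↔ z < Equiv.swap p p' y := by
    intro y
    have hzpv : (z : ℕ) ≠ (p : ℕ) := fun hc => hzp (Fin.ext hc)
    have hzpv' : (z : ℕ) ≠ (p' : ℕ) := fun hc => hzp' (Fin.ext hc)
    rcases eq_or_ne y p with rfl | hyp
    · rw [Equiv.swap_apply_left, Fin.lt_def, Fin.lt_def]
      omega
    · rcases eq_or_ne y p' with rfl | hyp'
      · rw [Equiv.swap_apply_right, Fin.lt_def, Fin.lt_def]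
        omega
      · rw [Equiv.swap_apply_of_ne_of_ne hyp hyp']
  unfold Nr1
  apply Finset.card_bij' (fun y _ => Equiv.swap p p' y) (fun y _ => Equiv.swap p p' y)
  · intro y hy
    simp only [Finset.mem_filter, Finset.mem_univ, true_and, Function.comp_apply] at hy ⊢
    exact ⟨(hz y).1 hy.1, hy.2⟩
  · intro y hy
    simp only [Finset.mem_filter, Finset.mem_univ, true_and, Function.comp_apply] at hy ⊢
    exact ⟨(hz y).1 hy.1, by rw [Equiv.swap_apply_self]; exact hy.2⟩
  · intro y _; exact Equiv.swap_apply_self _ _ _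
  · intro y _; exact Equiv.swap_apply_self _ _ _

lemma Nr1_swap_right (b : Conf L) (p p' : Fin (L + 1)) (hps : p < p') :
    Nr1 L (b ∘ Equiv.swap p p') p' = Nr1 L b p' := by
  unfold Nr1
  congr 1
  apply Finset.filter_congr
  intro y _
  by_cases hy : p' < y
  · have hyp' : y ≠ p' := (ne_of_gt hy)
    have hyp : y ≠ p := ne_of_gt (lt_trans hps hy)
    simp [hy, Equiv.swap_apply_of_ne_of_ne hyp hyp']
  · simp [hy]

lemma ff_swap_other (b : Conf L) (p p' z : Fin (L + 1)) (hps : (p' : ℕ) = (p : ℕ) + 1)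
    (hzp : z ≠ p) (hzp' : z ≠ p') :
    ff L q Q (b ∘ Equiv.swap p p') z = ff L q Q b z := by
  unfold ff
  rw [Nr1_swap_other b p p' z hps hzp hzp']
  have : (b ∘ Equiv.swap p p') z = b z := by
    simp [Equiv.swap_apply_of_ne_of_ne hzp hzp']
  rw [this]

lemma W_split (p p' : Fin (L + 1)) (hne : p ≠ p') (g : Conf L) :
    W L q Q g = ff L q Q g p * (ff L q Q g p' *
      ∏ z ∈ (Finset.univ.erase p).erase p', ff L q Q g z) := by
  unfold W
  rw [← Finset.mul_prod_erase Finset.univ _ (Finset.mem_univ p),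
    ← Finset.mul_prod_erase (Finset.univ.erase p) _
      (Finset.mem_erase.2 ⟨hne.symm, Finset.mem_univ p'⟩)]

/-- Core computation: swapping a strictly decreasing adjacent pair multiplies `W` by `q`. -/
lemma W_swap (hq : q ≠ 0) (p : Fin (L + 1)) (h : (p : ℕ) + 1 < L + 1) (b : Conf L)
    (hlt : b ⟨(p : ℕ) + 1, h⟩ < b p) :
    W L q Q (b ∘ Equiv.swap p ⟨(p : ℕ) + 1, h⟩) = q * W L q Q b := by
  set p' : Fin (L + 1) := ⟨(p : ℕ) + 1, h⟩ with hp'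
  set c : Conf L := b ∘ Equiv.swap p p' with hc
  have hps : (p' : ℕ) = (p : ℕ) + 1 := rfl
  have hpne : p ≠ p' := fun hcc => by
    have := congrArg Fin.val hcc
    simp [hps] at this
  have hcp : c p = b p' := by simp [hc]
  have hcp' : c p' = b p := by simp [hc]
  set n : ℕ := Nr1 L b p' with hn
  have hN2 : Nr1 L c p' = n := Nr1_swap_right b p p' (by rw [Fin.lt_def, hps]; omega)
  have hN3 : Nr1 L b p = n + (if b p' = 2 then 1 else 0) := Nr1_succ b p h
  have hN4 : Nr1 L c p = n + (if b p = 2 then 1 else 0) := by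
    have h5 := Nr1_succ c p h
    rw [hN2, hcp'] at h5
    exact h5
  rw [W_split p p' hpne c, W_split p p' hpne b]
  have hrest : ∏ z ∈ (Finset.univ.erase p).erase p', ff L q Q c z =
      ∏ z ∈ (Finset.univ.erase p).erase p', ff L q Q b z := by
    apply Finset.prod_congr rfl
    intro z hz
    rw [Finset.mem_erase, Finset.mem_erase] at hz
    exact ff_swap_other b p p' z hps hz.2.1 hz.1
  rw [hrest]
  have goal' : ff L q Q c p * ff L q Q c p' = q * (ff L q Q b p * ff L q Q b p') := by
    rw [Fin.lt_def] at hlt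
    rcases fin3_cases (b p) with hbp | hbp | hbp <;>
      rcases fin3_cases (b p') with hbp' | hbp' | hbp' <;>
        rw [hbp, hbp'] at hlt <;>
    first
      | (exact absurd hlt (by decide))
      | skip
    · -- b p = 1, b p' = 0
      have hA : Nr1 L b p = n := by rw [hN3, hbp']; simp
      have hB : Nr1 L c p = n := by rw [hN4, hbp]; simp
      have e1 : ff L q Q c p = q ^ ((L : ℤ) - (p : ℕ) - (n : ℤ)) := by
        rw [ff, if_neg (by rw [hcp, hbp']; decide), if_pos (by rw [hcp, hbp']), hB]
      have e2 : ff L q Q c p' = 1 := by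
        rw [ff, if_neg (by rw [hcp', hbp]; decide), if_neg (by rw [hcp', hbp]; decide)]
      have e3 : ff L q Q b p = 1 := by
        rw [ff, if_neg (by rw [hbp]; decide), if_neg (by rw [hbp]; decide)]
      have e4 : ff L q Q b p' = q ^ ((L : ℤ) - (p : ℕ) - 1 - (n : ℤ)) := by
        rw [ff, if_neg (by rw [hbp']; decide), if_pos (by rw [hbp']), ← hn, hps]
        congr 1 <;> (push_cast; try ring)
      rw [e1, e2, e3, e4,
        show ((L : ℤ) - (p : ℕ) - (n : ℤ)) = 1 + ((L : ℤ) - (p : ℕ) - 1 - (n : ℤ)) by ring,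
        zpow_add₀ hq, zpow_one]
      ring
    · -- b p = 2, b p' = 0
      have hA : Nr1 L b p = n := by rw [hN3, hbp']; simp
      have hB : Nr1 L c p = n + 1 := by rw [hN4, hbp]; simp
      have e1 : ff L q Q c p = q ^ ((L : ℤ) - (p : ℕ) - (n : ℤ) - 1) := by
        rw [ff, if_neg (by rw [hcp, hbp']; decide), if_pos (by rw [hcp, hbp']), hB]
        congr 1 <;> (push_cast; try ring)
      have e2 : ff L q Q c p' = Q * q ^ ((L : ℤ) + (p : ℕ) + 1 - (n : ℤ)) := by
        rw [ff, if_pos (by rw [hcp', hbp]), hN2, hps]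
        congr 1 <;> (push_cast; try ring)
      have e3 : ff L q Q b p = Q * q ^ ((L : ℤ) + (p : ℕ) - (n : ℤ)) := by
        rw [ff, if_pos hbp, hA]
      have e4 : ff L q Q b p' = q ^ ((L : ℤ) - (p : ℕ) - 1 - (n : ℤ)) := by
        rw [ff, if_neg (by rw [hbp']; decide), if_pos (by rw [hbp']), ← hn, hps]
        congr 1 <;> (push_cast; try ring)
      rw [e1, e2, e3, e4]
      have hcomb : q ^ ((L : ℤ) - (p : ℕ) - (n : ℤ) - 1) * q ^ ((L : ℤ) + (p : ℕ) + 1 - (n : ℤ)) =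
          q * (q ^ ((L : ℤ) + (p : ℕ) - (n : ℤ)) * q ^ ((L : ℤ) - (p : ℕ) - 1 - (n : ℤ))) := by
        rw [← zpow_add₀ hq, ← zpow_add₀ hq, ← zpow_one_add₀ hq]
        congr 1
        ring
      linear_combination Q * hcomb
    · -- b p = 2, b p' = 1
      have hA : Nr1 L b p = n := by rw [hN3, hbp']; simp
      have e1 : ff L q Q c p = 1 := by
        rw [ff, if_neg (by rw [hcp, hbp']; decide), if_neg (by rw [hcp, hbp']; decide)]
      have e2 : ff L q Q c p' = Q * q ^ ((L : ℤ) + (p : ℕ) + 1 - (n : ℤ)) := by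
        rw [ff, if_pos (by rw [hcp', hbp]), hN2, hps]
        congr 1 <;> (push_cast; try ring)
      have e3 : ff L q Q b p = Q * q ^ ((L : ℤ) + (p : ℕ) - (n : ℤ)) := by
        rw [ff, if_pos hbp, hA]
      have e4 : ff L q Q b p' = 1 := by
        rw [ff, if_neg (by rw [hbp']; decide), if_neg (by rw [hbp']; decide)]
      rw [e1, e2, e3, e4,
        show ((L : ℤ) + (p : ℕ) + 1 - (n : ℤ)) = 1 + ((L : ℤ) + (p : ℕ) - (n : ℤ)) by ring,
        zpow_add₀ hq, zpow_one]
      ring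
  linear_combination (∏ z ∈ (Finset.univ.erase p).erase p', ff L q Q b z) * goal'
lemma swap_ratio (hq : q ≠ 0) (p : Fin (L + 1)) (h : (p : ℕ) + 1 < L + 1)
    (b c : Conf L) (hcc : c = b ∘ Equiv.swap p ⟨(p : ℕ) + 1, h⟩)
    (hne : b p ≠ b ⟨(p : ℕ) + 1, h⟩) :
    q * W L q Q c = W L q Q b * (if b ⟨(p : ℕ) + 1, h⟩ < b p then q ^ 2 else 1) := by
  set p' : Fin (L + 1) := ⟨(p : ℕ) + 1, h⟩ with hp'
  by_cases hlt : b p' < b p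
  · rw [if_pos hlt, hcc, W_swap hq p h b hlt]
    ring
  · rw [if_neg hlt, mul_one]
    have hlt' : b p < b p' := lt_of_le_of_ne (not_lt.1 hlt) hne
    have hb : b = c ∘ Equiv.swap p p' := by
      rw [hcc]
      funext z
      simp [Equiv.swap_apply_self]
    have hcp : c p = b p' := by rw [hcc]; simp
    have hcp' : c p' = b p := by rw [hcc]; simp
    have hws := W_swap (L := L) (q := q) (Q := Q) hq p h c (by rw [hcp, hcp']; exact hlt')
    rw [← hb] at hws
    rw [hws]

lemma W_flip (b c : Conf L) (hz : ∀ z : Fin (L + 1), z ≠ 0 → c z = b z)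
    (hb0 : b 0 = 2) (hc0 : c 0 = 0) :
    W L q Q b = Q * W L q Q c := by
  have hN : ∀ z, Nr1 L c z = Nr1 L b z := by
    intro z
    unfold Nr1
    congr 1
    apply Finset.filter_congr
    intro y _
    by_cases hy : z < y
    · have hy0 : y ≠ 0 := by
        rintro rfl
        have hcon := Fin.lt_def.1 hy
        simp at hcon
      simp [hy, hz y hy0]
    · simp [hy]
  have hf : ∀ z ∈ Finset.univ.erase (0 : Fin (L + 1)), ff L q Q c z = ff L q Q b z := by
    intro z hzm
    rw [Finset.mem_erase] at hzm
    unfold ff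
    rw [hz z hzm.1, hN z]
  unfold W
  rw [← Finset.mul_prod_erase Finset.univ (ff L q Q b) (Finset.mem_univ 0),
    ← Finset.mul_prod_erase Finset.univ (ff L q Q c) (Finset.mem_univ 0),
    Finset.prod_congr rfl hf]
  have hfb : ff L q Q b 0 = Q * q ^ ((L : ℤ) - (Nr1 L b 0 : ℤ)) := by
    rw [ff, if_pos hb0]
    simp only [Fin.val_zero, Nat.cast_zero, add_zero, sub_zero]
  have hfc : ff L q Q c 0 = q ^ ((L : ℤ) - (Nr1 L b 0 : ℤ)) := by
    rw [ff, if_neg (by rw [hc0]; decide), if_pos hc0, hN 0]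
    simp only [Fin.val_zero, Nat.cast_zero, add_zero, sub_zero]
  rw [hfb, hfc]
  try ring

lemma Nr1_zero (b : Conf L) : Nr1 L b 0 = d1 L b := by
  unfold Nr1 d1
  congr 1

lemma Gfun_eq_W : Gfun L q Q = W L q Q := by
  funext b
  have h1 : Finset.univ.erase (0 : Fin (L + 1)) =
      Finset.univ.filter (fun z : Fin (L + 1) => 0 < (z : ℕ)) := by
    ext z
    simp only [Finset.mem_erase, Finset.mem_univ, and_true, Finset.mem_filter, true_and]
    constructor
    · intro hzz
      exact Nat.pos_of_ne_zero fun hv => hzz (Fin.ext (by simp [hv]))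
    · intro hzz hh
      rw [hh] at hzz
      simp at hzz
  have hzeta : ff L q Q b 0 = zeta0 L q Q b := by
    unfold ff zeta0
    rw [Nr1_zero]
    rcases fin3_cases (b 0) with h0 | h0 | h0
    · rw [if_neg (by rw [h0]; decide), if_pos h0, if_neg (by rw [h0]; decide),
        if_neg (by rw [h0]; decide)]
      simp only [Fin.val_zero, Nat.cast_zero, add_zero, sub_zero]
    · rw [if_neg (by rw [h0]; decide), if_neg (by rw [h0]; decide),
        if_neg (by rw [h0]; decide), if_pos h0]
    · rw [if_pos h0, if_pos h0]
      simp only [Fin.val_zero, Nat.cast_zero, add_zero, sub_zero]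
  have hW : W L q Q b = ff L q Q b 0 * ∏ z ∈ Finset.univ.erase (0 : Fin (L + 1)), ff L q Q b z :=
    (Finset.mul_prod_erase Finset.univ _ (Finset.mem_univ 0)).symm
  rw [Gfun, hW, hzeta, h1]
  rw [← Finset.prod_filter_mul_prod_filter_not
      (Finset.univ.filter (fun z : Fin (L + 1) => 0 < (z : ℕ))) (fun z => b z = 2) (ff L q Q b),
    ← Finset.prod_filter_mul_prod_filter_not
      ((Finset.univ.filter (fun z : Fin (L + 1) => 0 < (z : ℕ))).filter (fun z => ¬ b z = 2))
      (fun z => b z = 0) (ff L q Q b)]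
  have hP2 : ∏ z ∈ (Finset.univ.filter (fun z : Fin (L + 1) => 0 < (z : ℕ))).filter
      (fun z => b z = 2), ff L q Q b z =
      ∏ x ∈ Finset.univ.filter (fun x : Fin (L + 1) => 0 < (x : ℕ) ∧ b x = 2),
        Q * q ^ ((L : ℤ) + ((x : ℕ) : ℤ) - (Nr1 L b x : ℤ)) := by
    rw [Finset.filter_filter]
    apply Finset.prod_congr rfl
    intro z hzm
    rw [Finset.mem_filter] at hzm
    rw [ff, if_pos hzm.2.2]
  have hP0 : ∏ z ∈ ((Finset.univ.filter (fun z : Fin (L + 1) => 0 < (z : ℕ))).filter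
      (fun z => ¬ b z = 2)).filter (fun z => b z = 0), ff L q Q b z =
      ∏ y ∈ Finset.univ.filter (fun y : Fin (L + 1) => 0 < (y : ℕ) ∧ b y = 0),
        q ^ ((L : ℤ) - ((y : ℕ) : ℤ) - (Nr1 L b y : ℤ)) := by
    rw [Finset.filter_filter, Finset.filter_filter]
    have : Finset.univ.filter (fun z : Fin (L + 1) => 0 < (z : ℕ) ∧ (¬ b z = 2 ∧ b z = 0)) =
        Finset.univ.filter (fun y : Fin (L + 1) => 0 < (y : ℕ) ∧ b y = 0) := by
      apply Finset.filter_congr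
      intro z _
      constructor
      · rintro ⟨hz, -, hz0⟩; exact ⟨hz, hz0⟩
      · rintro ⟨hz, hz0⟩; exact ⟨hz, by rw [hz0]; decide, hz0⟩
    rw [this]
    apply Finset.prod_congr rfl
    intro z hzm
    rw [Finset.mem_filter] at hzm
    rw [ff, if_neg (by rw [hzm.2.2]; decide), if_pos hzm.2.2]
  have hP1 : ∏ z ∈ ((Finset.univ.filter (fun z : Fin (L + 1) => 0 < (z : ℕ))).filter
      (fun z => ¬ b z = 2)).filter (fun z => ¬ b z = 0), ff L q Q b z = 1 := by
    apply Finset.prod_eq_one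
    intro z hzm
    rw [Finset.mem_filter, Finset.mem_filter] at hzm
    rw [ff, if_neg hzm.2, if_neg hzm.1.2]
  rw [hP2, hP0, hP1]
  ring
/-- ℕ-indexed bulk rate term. -/
def Bt (L : ℕ) (q : ℝ) (η η' : Conf L) (m : ℕ) : ℝ :=
  if h : m + 1 < L + 1 then
    (if η' = η ∘ Equiv.swap ⟨m, by omega⟩ ⟨m + 1, h⟩ ∧ η ⟨m, by omega⟩ ≠ η ⟨m + 1, h⟩ then
      (if η ⟨m + 1, h⟩ < η ⟨m, by omega⟩ then q ^ 2 else 1)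
    else 0)
  else 0

lemma bulk_eq_sum (η η' : Conf L) :
    bulk L q η η' = ∑ m ∈ Finset.range (L + 1), Bt L q η η' m := by
  rw [bulk, ← Fin.sum_univ_eq_sum_range (Bt L q η η') (L + 1)]
  apply Finset.sum_congr rfl
  intro p _
  simp only [Bt, Fin.eta]

lemma Icc_sum_shift (g : ℕ → ℝ) (hgL : g L = 0) :
    ∑ x ∈ Finset.Icc 1 L, g (x - 1) = ∑ m ∈ Finset.range (L + 1), g m := by
  rw [← Finset.Ico_add_one_right_eq_Icc, Finset.sum_Ico_eq_sum_range]
  simp only [Nat.add_sub_cancel, Nat.add_sub_cancel_left, Nat.succ_sub_one]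
  rw [Finset.sum_range_succ, hgL, add_zero]

lemma qT_W_offdiag (hq : q ≠ 0) (a c : Conf L) (hac : c ≠ a) (x : ℕ)
    (hx : x ∈ Finset.Icc 1 L) :
    qT L q x a c * W L q Q c = W L q Q a * Bt L q a c (x - 1) := by
  rw [Finset.mem_Icc] at hx
  obtain ⟨m, rfl⟩ : ∃ m, x = m + 1 := ⟨x - 1, by omega⟩
  rw [qT, dif_pos (show 1 ≤ m + 1 ∧ m + 1 ≤ L from ⟨by omega, hx.2⟩), if_neg hac, Bt]
  simp only [Nat.add_sub_cancel]
  rw [dif_pos (show m + 1 < L + 1 by omega)]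
  have hmlt : m < L + 1 := by omega
  have hm1lt : m + 1 < L + 1 := by omega
  by_cases hcond : c = a ∘ Equiv.swap ⟨m, hmlt⟩ ⟨m + 1, hm1lt⟩ ∧
      a ⟨m, hmlt⟩ ≠ a ⟨m + 1, hm1lt⟩
  · rw [if_pos hcond, if_pos hcond]
    exact swap_ratio hq ⟨m, hmlt⟩ hm1lt a c hcond.1 hcond.2
  · rw [if_neg hcond, if_neg hcond, zero_mul, mul_zero]

lemma QT0_W_offdiag (a c : Conf L) (hac : c ≠ a) :
    QT0 L Q a c * W L q Q c = W L q Q a * bdry L Q a c := by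
  rw [QT0, bdry, if_neg hac]
  by_cases h1 : (∀ z : Fin (L + 1), z ≠ 0 → c z = a z) ∧ a 0 = 2 ∧ c 0 = 0
  · rw [if_pos (show (∀ z : Fin (L + 1), z ≠ 0 → c z = a z) ∧
        ((a 0 = 0 ∧ c 0 = 2) ∨ (a 0 = 2 ∧ c 0 = 0)) from ⟨h1.1, Or.inr ⟨h1.2.1, h1.2.2⟩⟩),
      if_pos h1, mul_one]
    exact (W_flip a c h1.1 h1.2.1 h1.2.2).symm
  · by_cases h2 : (∀ z : Fin (L + 1), z ≠ 0 → c z = a z) ∧ a 0 = 0 ∧ c 0 = 2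
    · rw [if_pos (show (∀ z : Fin (L + 1), z ≠ 0 → c z = a z) ∧
          ((a 0 = 0 ∧ c 0 = 2) ∨ (a 0 = 2 ∧ c 0 = 0)) from ⟨h2.1, Or.inl ⟨h2.2.1, h2.2.2⟩⟩),
        if_neg h1, if_pos h2]
      have hwf := W_flip (q := q) (Q := Q) c a (fun z hz => (h2.1 z hz).symm) h2.2.2 h2.2.1
      rw [hwf]
      ring
    · have hno : ¬ ((∀ z : Fin (L + 1), z ≠ 0 → c z = a z) ∧
          ((a 0 = 0 ∧ c 0 = 2) ∨ (a 0 = 2 ∧ c 0 = 0))) := by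
        rintro ⟨hz, hor | hor⟩
        exacts [h2 ⟨hz, hor⟩, h1 ⟨hz, hor⟩]
      rw [if_neg hno, if_neg h1, if_neg h2, zero_mul, mul_zero]

lemma bdry_sum (a : Conf L) :
    ∑ e : Conf L, (if e = a then 0 else bdry L Q a e) =
      (if a 0 = 2 then 1 else if a 0 = 0 then Q ^ 2 else 0) := by
  rcases fin3_cases (a 0) with h0 | h0 | h0
  · rw [if_neg (by rw [h0]; decide), if_pos h0]
    set cfg : Conf L := Function.update a 0 2 with hcfg
    rw [Finset.sum_eq_single_of_mem cfg (Finset.mem_univ _)]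
    · have hcfga : cfg ≠ a := by
        intro hcc
        have h4 := congrFun hcc 0
        rw [hcfg, Function.update_self, h0] at h4
        exact absurd h4 (by decide)
      rw [if_neg hcfga, bdry,
        if_neg (fun hcon => absurd (h0 ▸ hcon.2.1) (by decide)),
        if_pos ⟨fun z hz => Function.update_of_ne hz _ _, h0, Function.update_self _ _ _⟩]
    · intro e _ hne
      by_cases hea : e = a
      · rw [if_pos hea]
      · rw [if_neg hea, bdry,
          if_neg (fun hcon => absurd (h0 ▸ hcon.2.1) (by decide)),
          if_neg (fun hcon => hne (funext fun z => by
            by_cases hz : z = 0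
            · rw [hz, hcon.2.2, hcfg, Function.update_self]
            · rw [hcon.1 z hz, hcfg, Function.update_of_ne hz]))]
  · rw [if_neg (by rw [h0]; decide), if_neg (by rw [h0]; decide)]
    apply Finset.sum_eq_zero
    intro e _
    by_cases hea : e = a
    · rw [if_pos hea]
    · rw [if_neg hea, bdry,
        if_neg (fun hcon => absurd (h0 ▸ hcon.2.1) (by decide)),
        if_neg (fun hcon => absurd (h0 ▸ hcon.2.1) (by decide))]
  · rw [if_pos h0]
    set cfg : Conf L := Function.update a 0 0 with hcfg
    rw [Finset.sum_eq_single_of_mem cfg (Finset.mem_univ _)]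
    · have hcfga : cfg ≠ a := by
        intro hcc
        have h4 := congrFun hcc 0
        rw [hcfg, Function.update_self, h0] at h4
        exact absurd h4 (by decide)
      rw [if_neg hcfga, bdry,
        if_pos ⟨fun z hz => Function.update_of_ne hz _ _, h0, Function.update_self _ _ _⟩]
    · intro e _ hne
      by_cases hea : e = a
      · rw [if_pos hea]
      · rw [if_neg hea, bdry,
          if_neg (fun hcon => hne (funext fun z => by
            by_cases hz : z = 0
            · rw [hz, hcon.2.2, hcfg, Function.update_self]
            · rw [hcon.1 z hz, hcfg, Function.update_of_ne hz])),
          if_neg (fun hcon => absurd (h0 ▸ hcon.2.1) (by decide))]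

lemma bulk_diag_sum (a : Conf L) (m : ℕ) :
    ∑ e : Conf L, (if e = a then 0 else Bt L q a e m) =
      (if h : m + 1 < L + 1 then
        (if a ⟨m, by omega⟩ = a ⟨m + 1, h⟩ then 0
         else if a ⟨m + 1, h⟩ < a ⟨m, by omega⟩ then q ^ 2 else 1)
      else 0) := by
  by_cases h : m + 1 < L + 1
  · rw [dif_pos h]
    have hmlt : m < L + 1 := by omega
    by_cases heq : a ⟨m, hmlt⟩ = a ⟨m + 1, h⟩
    · rw [if_pos heq]
      apply Finset.sum_eq_zero
      intro e _
      by_cases hea : e = a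
      · rw [if_pos hea]
      · rw [if_neg hea, Bt, dif_pos h, if_neg (fun hc => hc.2 heq)]
    · rw [if_neg heq]
      set cfg : Conf L := a ∘ Equiv.swap ⟨m, hmlt⟩ ⟨m + 1, h⟩ with hcfg
      rw [Finset.sum_eq_single_of_mem cfg (Finset.mem_univ _)]
      · have hcfga : cfg ≠ a := by
          intro hcc
          have h4 := congrFun hcc ⟨m, hmlt⟩
          rw [hcfg] at h4
          simp only [Function.comp_apply, Equiv.swap_apply_left] at h4
          exact heq h4.symm
        rw [if_neg hcfga, Bt, dif_pos h, if_pos ⟨rfl, heq⟩]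
      · intro e _ hne
        by_cases hea : e = a
        · rw [if_pos hea]
        · rw [if_neg hea, Bt, dif_pos h, if_neg (fun hc => hne hc.1)]
  · rw [dif_neg h]
    apply Finset.sum_eq_zero
    intro e _
    by_cases hea : e = a
    · rw [if_pos hea]
    · rw [if_neg hea, Bt, dif_neg h]

lemma qT_diag (a : Conf L) (x : ℕ) (hx : x ∈ Finset.Icc 1 L) :
    (1 : ℝ) - qT L q x a a =
      ∑ e : Conf L, (if e = a then 0 else Bt L q a e (x - 1)) := by
  rw [Finset.mem_Icc] at hx
  obtain ⟨m, rfl⟩ : ∃ m, x = m + 1 := ⟨x - 1, by omega⟩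
  rw [qT, dif_pos (show 1 ≤ m + 1 ∧ m + 1 ≤ L from ⟨by omega, hx.2⟩), if_pos rfl,
    bulk_diag_sum]
  simp only [Nat.add_sub_cancel]
  rw [dif_pos (show m + 1 < L + 1 by omega)]
  have hmlt : m < L + 1 := by omega
  have hm1lt : m + 1 < L + 1 := by omega
  by_cases heq : a ⟨m, hmlt⟩ = a ⟨m + 1, hm1lt⟩
  · rw [if_pos heq, if_pos heq]
    ring
  · rw [if_neg heq, if_neg heq]
    by_cases hlt : a ⟨m + 1, hm1lt⟩ < a ⟨m, hmlt⟩
    · rw [if_pos hlt, if_pos hlt]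
      ring
    · rw [if_neg hlt, if_neg hlt]
      ring

lemma diag_eq (a : Conf L) :
    Ham L q Q a a - ((L : ℝ) + 1) = gen L q Q a a := by
  rw [gen, if_pos rfl, Ham, Matrix.add_apply, Matrix.sum_apply]
  have hsplit : ∑ e : Conf L, (if e = a then 0 else bulk L q a e + bdry L Q a e) =
      (∑ e : Conf L, (if e = a then 0 else bulk L q a e)) +
      (∑ e : Conf L, (if e = a then 0 else bdry L Q a e)) := by
    rw [← Finset.sum_add_distrib]
    apply Finset.sum_congr rfl
    intro e _
    by_cases hea : e = a <;> simp [hea]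
  have hbulk : ∑ e : Conf L, (if e = a then 0 else bulk L q a e) =
      ∑ x ∈ Finset.Icc 1 L, ((1 : ℝ) - qT L q x a a) := by
    have hpt : ∀ e : Conf L, (if e = a then 0 else bulk L q a e) =
        ∑ m ∈ Finset.range (L + 1), (if e = a then 0 else Bt L q a e m) := by
      intro e
      by_cases hea : e = a
      · simp [hea]
      · rw [if_neg hea, bulk_eq_sum]
        exact Finset.sum_congr rfl fun m _ => (if_neg hea).symm
    rw [Finset.sum_congr rfl fun e _ => hpt e, Finset.sum_comm]
    rw [Finset.sum_congr rfl fun x hx => qT_diag a x hx]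
    rw [Icc_sum_shift (fun m => ∑ e : Conf L, (if e = a then 0 else Bt L q a e m))
      (by show (∑ e : Conf L, (if e = a then 0 else Bt L q a e L)) = 0
          rw [bulk_diag_sum]
          exact dif_neg (by omega))]
  rw [hsplit, hbulk, bdry_sum]
  have hQT0 : QT0 L Q a a - 1 = -(if a 0 = 2 then 1 else if a 0 = 0 then Q ^ 2 else 0) := by
    rw [QT0, if_pos rfl]
    rcases fin3_cases (a 0) with h0 | h0 | h0
    · rw [if_neg (by rw [h0]; decide), if_pos h0, if_neg (by rw [h0]; decide), if_pos h0]
      ring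
    · rw [if_pos h0, if_neg (by rw [h0]; decide), if_neg (by rw [h0]; decide)]
      ring
    · rw [if_neg (by rw [h0]; decide), if_neg (by rw [h0]; decide), if_pos h0]
      ring
  have hsum : ∑ x ∈ Finset.Icc 1 L, ((1 : ℝ) - qT L q x a a) =
      (L : ℝ) - ∑ x ∈ Finset.Icc 1 L, qT L q x a a := by
    rw [Finset.sum_sub_distrib, Finset.sum_const, Nat.card_Icc]
    simp
  rw [hsum] at *
  linarith [hQT0]
end Aux

/-- **Ground-state transformation** (Proposition, part (b), in the proof of
Theorem 1.3): `G⁻¹ (H − (L+1)·Id) G` equals the generator of the single-species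
open ASEP. -/
theorem conjugated_Hamiltonian_is_open_ASEP_generator (L : ℕ) (hL : 1 ≤ L)
    (q Q : ℝ) (hq0 : 0 < q) (hq1 : q < 1) (hQ0 : 0 < Q) (hQ1 : Q < 1) :
    (Matrix.diagonal (Gfun L q Q))⁻¹ *
        (Ham L q Q - ((L : ℝ) + 1) • (1 : Matrix (Conf L) (Conf L) ℝ)) *
        Matrix.diagonal (Gfun L q Q) =
      gen L q Q := by
  rw [Gfun_eq_W]
  have hW0 : ∀ b : Conf L, W L q Q b ≠ 0 := fun b => (W_pos hq0 hQ0 b).ne'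
  have hdet : IsUnit (Matrix.diagonal (W L q Q)).det := by
    rw [Matrix.det_diagonal]
    exact (Finset.prod_ne_zero_iff.2 fun b _ => hW0 b).isUnit
  have key : (Ham L q Q - ((L : ℝ) + 1) • (1 : Matrix (Conf L) (Conf L) ℝ)) *
      Matrix.diagonal (W L q Q) = Matrix.diagonal (W L q Q) * gen L q Q := by
    ext a c
    rw [Matrix.mul_diagonal, Matrix.diagonal_mul, Matrix.sub_apply, Matrix.smul_apply,
      Matrix.one_apply]
    by_cases hac : c = a
    · subst hac
      rw [if_pos rfl, smul_eq_mul, mul_one, ← diag_eq c]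
      ring
    · rw [if_neg (fun hc => hac hc.symm), smul_zero, sub_zero, Ham, Matrix.add_apply,
        Matrix.sum_apply, gen, if_neg hac, add_mul, Finset.sum_mul, mul_add]
      have h1 : QT0 L Q a c * W L q Q c = W L q Q a * bdry L Q a c :=
        QT0_W_offdiag a c hac
      have h2 : ∑ x ∈ Finset.Icc 1 L, qT L q x a c * W L q Q c =
          W L q Q a * bulk L q a c := by
        rw [Finset.sum_congr rfl fun x hx => qT_W_offdiag hq0.ne' a c hac x hx,
          ← Finset.mul_sum]
        rw [Icc_sum_shift (Bt L q a c) (by rw [Bt]; exact dif_neg (by omega)),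
          ← bulk_eq_sum]
      linear_combination h1 + h2
  calc (Matrix.diagonal (W L q Q))⁻¹ *
        (Ham L q Q - ((L : ℝ) + 1) • (1 : Matrix (Conf L) (Conf L) ℝ)) *
        Matrix.diagonal (W L q Q)
      = (Matrix.diagonal (W L q Q))⁻¹ *
        ((Ham L q Q - ((L : ℝ) + 1) • (1 : Matrix (Conf L) (Conf L) ℝ)) *
          Matrix.diagonal (W L q Q)) := by rw [Matrix.mul_assoc]
    _ = (Matrix.diagonal (W L q Q))⁻¹ * (Matrix.diagonal (W L q Q) * gen L q Q) := by
          rw [key]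
    _ = ((Matrix.diagonal (W L q Q))⁻¹ * Matrix.diagonal (W L q Q)) * gen L q Q := by
          rw [Matrix.mul_assoc]
    _ = gen L q Q := by rw [Matrix.nonsing_inv_mul _ hdet, Matrix.one_mul]

end Stmt8

end
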